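/- Let x, y, z be generators of a grid diagram of size N. For any D₁ ∈ 𝒟(x,y) and D₂ ∈ 𝒟(y,z), the pointwise sum D₁ + D₂ belongs to 𝒟(x,z) and μ(D₁ + D₂) = μ(D₁) + μ(D₂). Consequently, whenever 𝒟(x,y) and 𝒟(y,z) are nonempty, the relative gradings satisfy M(x,y) + M(y,z) = M(x,z) and A(x,y) + A(y,z) = A(x,z). -/

import Mathlib

/-- A generator of a grid diagram of size `N`: a permutation of `ℤ/N`. -/
abbrev GridGen (N : ℕ) := Equiv.Perm (ZMod N)

/-- The alternating corner sum of a 2-chain `D` at the lattice point `(a, b)`. -/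
def cornerSum (N : ℕ) (D : ZMod N → ZMod N → ℤ) (a b : ZMod N) : ℤ :=
  D a b - D (a - 1) b - D a (b - 1) + D (a - 1) (b - 1)

/-- `D` is a domain from the generator `x` to the generator `y`: the alternating
corner sum at a lattice point `p` is `1` if `p ∈ x \ y`, `-1` if `p ∈ y \ x`, and
`0` otherwise. -/
def IsGridDomain (N : ℕ) (x y : GridGen N) (D : ZMod N → ZMod N → ℤ) : Prop :=
  ∀ a b : ZMod N, cornerSum N D a b =
    if x a = b ∧ y a ≠ b then 1 else if y a = b ∧ x a ≠ b then -1 else 0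

/-- The point measure `n_p(D)` at the lattice point `p = (a, b)`: the average of
the values of `D` on the four squares around `p`. -/
def gridNp (N : ℕ) (D : ZMod N → ZMod N → ℤ) (a b : ZMod N) : ℚ :=
  ((D a b : ℚ) + (D (a - 1) b : ℚ) + (D a (b - 1) : ℚ) + (D (a - 1) (b - 1) : ℚ)) / 4

/-- The Maslov index `μ(D) = Σ_i (n_{(i, x i)}(D) + n_{(i, y i)}(D))`. -/
def maslovIndex (N : ℕ) [NeZero N] (x y : GridGen N) (D : ZMod N → ZMod N → ℤ) : ℚ :=
  ∑ i : ZMod N, (gridNp N D i (x i) + gridNp N D i (y i))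

namespace GridAux

variable {N : ℕ} [NeZero N]

lemma sum_shift {M : Type*} [AddCommMonoid M] (g : ZMod N → M) (s : ZMod N) :
    ∑ a, g (a + s) = ∑ a, g a :=
  Equiv.sum_comp (Equiv.addRight s) g

lemma sum_shift_sub {M : Type*} [AddCommMonoid M] (g : ZMod N → M) :
    ∑ a, g (a - 1) = ∑ a, g a := by
  have := sum_shift g (-1)
  simpa [← sub_eq_add_neg] using this

lemma double_shift (f : ZMod N → ZMod N → ℤ) (s t : ZMod N) :
    ∑ a, ∑ b, f (a + s) (b + t) = ∑ a, ∑ b, f a b :=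
  calc ∑ a, ∑ b, f (a + s) (b + t)
      = ∑ a, ∑ b, f a (b + t) := sum_shift (fun a => ∑ b, f a (b + t)) s
    _ = ∑ a, ∑ b, f a b := Finset.sum_congr rfl fun a _ => sum_shift (f a) t

lemma swap_shift (D E : ZMod N → ZMod N → ℤ) (s t : ZMod N) :
    ∑ a, ∑ b, D a b * E (a + s) (b + t) = ∑ a, ∑ b, E a b * D (a - s) (b - t) := by
  have h := double_shift (fun a b => E a b * D (a - s) (b - t)) s t
  simp only [add_sub_cancel_right] at h
  rw [← h]
  exact Finset.sum_congr rfl fun a _ => Finset.sum_congr rfl fun b _ => mul_comm _ _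

lemma magic (D E : ZMod N → ZMod N → ℤ) :
    ∑ a, ∑ b, D a b * (E (a-1) (b-1) - E (a+1) (b-1) - E (a-1) (b+1) + E (a+1) (b+1))
    = ∑ a, ∑ b, E a b * (D (a-1) (b-1) - D (a+1) (b-1) - D (a-1) (b+1) + D (a+1) (b+1)) := by
  have e1 := swap_shift D E (-1) (-1)
  have e2 := swap_shift D E 1 (-1)
  have e3 := swap_shift D E (-1) 1
  have e4 := swap_shift D E 1 1
  simp only [← sub_eq_add_neg, sub_neg_eq_add] at e1 e2 e3 e4
  simp only [mul_sub, mul_add, Finset.sum_add_distrib, Finset.sum_sub_distrib]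
  rw [e1, e2, e3, e4]
  ring

end GridAux

namespace GridAux
variable {N : ℕ} [NeZero N]

/-- Four times the sum of point measures along the generator `w`, as an integer. -/
def S4 (D : ZMod N → ZMod N → ℤ) (w : GridGen N) : ℤ :=
  ∑ i, (D i (w i) + D (i-1) (w i) + D i (w i - 1) + D (i-1) (w i - 1))

lemma sum_gridNp_eq (D : ZMod N → ZMod N → ℤ) (w : GridGen N) :
    ∑ i, gridNp N D i (w i) = (S4 D w : ℚ) / 4 := by
  unfold S4
  push_cast
  rw [Finset.sum_div]
  refine Finset.sum_congr rfl fun i _ => ?_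
  rw [gridNp]

lemma S4_eq' (D : ZMod N → ZMod N → ℤ) (w : GridGen N) :
    S4 D w = ∑ a, (D a (w a) + D a (w (a+1)) + D a (w a - 1) + D a (w (a+1) - 1)) := by
  unfold S4
  have h := sum_shift (fun i => D (i-1) (w i) + D (i-1) (w i - 1)) 1
  simp only [add_sub_cancel_right] at h
  calc ∑ i, (D i (w i) + D (i-1) (w i) + D i (w i - 1) + D (i-1) (w i - 1))
      = ∑ i, ((D i (w i) + D i (w i - 1)) + (D (i-1) (w i) + D (i-1) (w i - 1))) := by
        exact Finset.sum_congr rfl fun i _ => by ring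
    _ = (∑ i, (D i (w i) + D i (w i - 1)))
          + ∑ i, (D (i-1) (w i) + D (i-1) (w i - 1)) := Finset.sum_add_distrib
    _ = (∑ i, (D i (w i) + D i (w i - 1)))
          + ∑ a, (D a (w (a+1)) + D a (w (a+1) - 1)) := by rw [← h]
    _ = ∑ a, (D a (w a) + D a (w (a+1)) + D a (w a - 1) + D a (w (a+1) - 1)) := by
        rw [← Finset.sum_add_distrib]
        exact Finset.sum_congr rfl fun a _ => by ring

lemma S4_eq (D : ZMod N → ZMod N → ℤ) (w : GridGen N) :
    S4 D w = ∑ a, ∑ b, D a b *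
      ((if w a = b then 1 else 0) + (if w (a+1) = b then 1 else 0)
        + (if w a = b + 1 then 1 else 0) + (if w (a+1) = b + 1 then 1 else 0)) := by
  rw [S4_eq']
  refine Finset.sum_congr rfl fun a _ => ?_
  have collapse : ∀ (c : ZMod N), ∑ b, D a b * (if c = b then (1:ℤ) else 0) = D a c := by
    intro c
    simp [mul_ite, Finset.sum_ite_eq]
  have hcond : ∀ (u v : ZMod N), (u = v + 1) ↔ (u - 1 = v) := fun u v =>
    sub_eq_iff_eq_add.symm
  simp only [mul_add, Finset.sum_add_distrib, hcond, collapse]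

end GridAux

namespace GridAux
variable {N : ℕ} [NeZero N]

lemma cornerSum_eq_ind {x y : GridGen N} {D : ZMod N → ZMod N → ℤ}
    (h : IsGridDomain N x y D) (a b : ZMod N) :
    cornerSum N D a b = (if x a = b then 1 else 0) - (if y a = b then 1 else 0) := by
  rw [h a b]
  by_cases hx : x a = b <;> by_cases hy : y a = b <;> simp [hx, hy]

lemma corner4 (E : ZMod N → ZMod N → ℤ) (a b : ZMod N) :
    cornerSum N E a b + cornerSum N E (a+1) b + cornerSum N E a (b+1)
      + cornerSum N E (a+1) (b+1)
    = E (a-1) (b-1) - E (a+1) (b-1) - E (a-1) (b+1) + E (a+1) (b+1) := by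
  simp only [cornerSum, add_sub_cancel_right]
  ring

lemma S4_sub {u v : GridGen N} {E : ZMod N → ZMod N → ℤ} (h : IsGridDomain N u v E)
    (D : ZMod N → ZMod N → ℤ) :
    S4 D u - S4 D v = ∑ a, ∑ b, D a b *
      (E (a-1) (b-1) - E (a+1) (b-1) - E (a-1) (b+1) + E (a+1) (b+1)) := by
  rw [S4_eq D u, S4_eq D v, ← Finset.sum_sub_distrib]
  refine Finset.sum_congr rfl fun a _ => ?_
  rw [← Finset.sum_sub_distrib]
  refine Finset.sum_congr rfl fun b _ => ?_
  rw [← mul_sub]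
  congr 1
  have c1 := cornerSum_eq_ind h a b
  have c2 := cornerSum_eq_ind h (a+1) b
  have c3 := cornerSum_eq_ind h a (b+1)
  have c4 := cornerSum_eq_ind h (a+1) (b+1)
  have c5 := corner4 E a b
  linarith

lemma key {x y z : GridGen N} {D₁ D₂ : ZMod N → ZMod N → ℤ}
    (h₁ : IsGridDomain N x y D₁) (h₂ : IsGridDomain N y z D₂) :
    S4 D₂ x - S4 D₂ y = S4 D₁ y - S4 D₁ z := by
  rw [S4_sub h₁ D₂, S4_sub h₂ D₁]
  exact magic D₂ D₁

end GridAux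

namespace GridAux
variable {N : ℕ} [NeZero N]

lemma eq_of_succ {M : Type*} (ψ : ZMod N → M) (h : ∀ a, ψ (a + 1) = ψ a) (a : ZMod N) :
    ψ a = ψ 0 := by
  have hn : ∀ n : ℕ, ψ (n : ZMod N) = ψ 0 := by
    intro n
    induction n with
    | zero => simp
    | succ k ih =>
      have : ((k + 1 : ℕ) : ZMod N) = (k : ZMod N) + 1 := by push_cast; ring
      rw [this, h]; exact ih
  have := hn a.val
  rwa [ZMod.natCast_val, ZMod.cast_id] at this

lemma struct {E : ZMod N → ZMod N → ℤ} (hE : ∀ a b, cornerSum N E a b = 0)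
    (a b : ZMod N) : E a b = (E a 0 - E 0 0) + E 0 b := by
  have hr : ∀ (p q : ZMod N), E p q - E (p-1) q = E p 0 - E (p-1) 0 := by
    intro p q
    refine eq_of_succ (fun r => E p r - E (p-1) r) (fun r => ?_) q
    have h0 := hE p (r + 1)
    simp only [cornerSum, add_sub_cancel_right] at h0
    show E p (r+1) - E (p-1) (r+1) = E p r - E (p-1) r
    omega
  have hc : ∀ (p : ZMod N), E p b - E p 0 = E 0 b - E 0 0 := by
    intro p
    refine eq_of_succ (fun r => E r b - E r 0) (fun r => ?_) p
    have h1 := hr (r + 1) b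
    simp only [add_sub_cancel_right] at h1
    show E (r+1) b - E (r+1) 0 = E r b - E r 0
    omega
  have := hc a
  omega

end GridAux

namespace GridAux
variable {N : ℕ} [NeZero N]

lemma maslov_eq (x z : GridGen N) (D : ZMod N → ZMod N → ℤ) :
    maslovIndex N x z D = ((S4 D x : ℚ) + (S4 D z : ℚ)) / 4 := by
  unfold maslovIndex
  rw [Finset.sum_add_distrib, sum_gridNp_eq, sum_gridNp_eq]
  ring

lemma S4_split {D₃ D₁ D₂ : ZMod N → ZMod N → ℤ} (f g : ZMod N → ℤ)
    (hD : ∀ a b, D₃ a b = D₁ a b + D₂ a b + (f a + g b)) (w : GridGen N) :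
    S4 D₃ w = S4 D₁ w + S4 D₂ w + S4 (fun a b => f a + g b) w := by
  unfold S4
  rw [← Finset.sum_add_distrib, ← Finset.sum_add_distrib]
  refine Finset.sum_congr rfl fun i _ => ?_
  rw [hD, hD, hD, hD]
  ring

lemma S4_fg (f g : ZMod N → ℤ) (w : GridGen N) :
    S4 (fun a b => f a + g b) w = 4 * (∑ i, f i) + 4 * (∑ i, g i) := by
  unfold S4
  have h1 : ∑ i : ZMod N, f (i - 1) = ∑ i, f i := sum_shift_sub f
  have h2 : ∑ i : ZMod N, g (w i) = ∑ i, g i := Equiv.sum_comp w g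
  have h3 : ∑ i : ZMod N, g (w i - 1) = ∑ i, g i := by
    have := Equiv.sum_comp w (fun j => g (j - 1))
    rw [this]; exact sum_shift_sub g
  calc ∑ i : ZMod N, ((f i + g (w i)) + (f (i-1) + g (w i)) + (f i + g (w i - 1))
          + (f (i-1) + g (w i - 1)))
      = ∑ i : ZMod N, ((f i + f i) + (f (i-1) + f (i-1)) + (g (w i) + g (w i))
          + (g (w i - 1) + g (w i - 1))) := Finset.sum_congr rfl fun i _ => by ring
    _ = (∑ i : ZMod N, (f i + f i)) + (∑ i : ZMod N, (f (i-1) + f (i-1)))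
          + (∑ i : ZMod N, (g (w i) + g (w i)))
          + (∑ i : ZMod N, (g (w i - 1) + g (w i - 1))) := by
        rw [← Finset.sum_add_distrib, ← Finset.sum_add_distrib, ← Finset.sum_add_distrib]
    _ = 4 * (∑ i, f i) + 4 * (∑ i, g i) := by
        rw [Finset.sum_add_distrib, Finset.sum_add_distrib, Finset.sum_add_distrib,
          Finset.sum_add_distrib, h1, h2, h3]
        ring

end GridAux

namespace GridAux
variable {N : ℕ} [NeZero N]

lemma S4_add (D₁ D₂ : ZMod N → ZMod N → ℤ) (w : GridGen N) :
    S4 (fun a b => D₁ a b + D₂ a b) w = S4 D₁ w + S4 D₂ w := by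
  unfold S4
  rw [← Finset.sum_add_distrib]
  refine Finset.sum_congr rfl fun i _ => ?_
  show (D₁ i (w i) + D₂ i (w i)) + (D₁ (i-1) (w i) + D₂ (i-1) (w i))
      + (D₁ i (w i - 1) + D₂ i (w i - 1)) + (D₁ (i-1) (w i - 1) + D₂ (i-1) (w i - 1)) = _
  ring

end GridAux


/-- For `D₁ ∈ 𝒟(x,y)` and `D₂ ∈ 𝒟(y,z)`, the pointwise sum
`D₁ + D₂` belongs to `𝒟(x,z)` and `μ(D₁ + D₂) = μ(D₁) + μ(D₂)`.  Consequently
the relative Maslov and Alexander gradings are additive: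
`M(x,y) + M(y,z) = M(x,z)` and `A(x,y) + A(y,z) = A(x,z)`. -/
theorem relative_gradings_additive (N : ℕ) [NeZero N] (hN : 2 ≤ N)
    (σO σX : GridGen N) (hσ : ∀ i : ZMod N, σO i ≠ σX i)
    (x y z : GridGen N) (D₁ D₂ : ZMod N → ZMod N → ℤ)
    (h₁ : IsGridDomain N x y D₁) (h₂ : IsGridDomain N y z D₂) :
    IsGridDomain N x z (fun a b => D₁ a b + D₂ a b) ∧
      maslovIndex N x z (fun a b => D₁ a b + D₂ a b) =
        maslovIndex N x y D₁ + maslovIndex N y z D₂ ∧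
      ∀ D₃ : ZMod N → ZMod N → ℤ, IsGridDomain N x z D₃ →
        ((maslovIndex N x y D₁ - 2 * ∑ i : ZMod N, (D₁ i (σO i) : ℚ)) +
            (maslovIndex N y z D₂ - 2 * ∑ i : ZMod N, (D₂ i (σO i) : ℚ)) =
          maslovIndex N x z D₃ - 2 * ∑ i : ZMod N, (D₃ i (σO i) : ℚ)) ∧
        ((∑ i : ZMod N, (D₁ i (σX i) - D₁ i (σO i))) +
            (∑ i : ZMod N, (D₂ i (σX i) - D₂ i (σO i))) =
          ∑ i : ZMod N, (D₃ i (σX i) - D₃ i (σO i))) := by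
  classical
  -- Part 1 : the sum is a domain from x to z
  have hdom : IsGridDomain N x z (fun a b => D₁ a b + D₂ a b) := by
    intro a b
    have e1 := h₁ a b
    have e2 := h₂ a b
    have e : cornerSum N (fun a b => D₁ a b + D₂ a b) a b
        = cornerSum N D₁ a b + cornerSum N D₂ a b := by
      simp only [cornerSum]; ring
    rw [e, e1, e2]
    by_cases hx : x a = b <;> by_cases hy : y a = b <;> by_cases hz : z a = b <;>
      simp [hx, hy, hz]
  -- Part 2 : additivity of the Maslov index
  have hmu : maslovIndex N x z (fun a b => D₁ a b + D₂ a b) =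
      maslovIndex N x y D₁ + maslovIndex N y z D₂ := by
    have hk : (GridAux.S4 D₂ x : ℚ) - GridAux.S4 D₂ y
        = (GridAux.S4 D₁ y : ℚ) - GridAux.S4 D₁ z := by
      exact_mod_cast congrArg (fun t : ℤ => (t : ℚ)) (GridAux.key h₁ h₂)
    rw [GridAux.maslov_eq, GridAux.maslov_eq, GridAux.maslov_eq,
      GridAux.S4_add, GridAux.S4_add]
    push_cast
    linarith
  refine ⟨hdom, hmu, ?_⟩
  -- Part 3 : independence of the choice of domain
  intro D₃ h₃
  obtain ⟨f, g, hD⟩ : ∃ f g : ZMod N → ℤ,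
      ∀ a b, D₃ a b = D₁ a b + D₂ a b + (f a + g b) := by
    refine ⟨fun a => (D₃ a 0 - D₁ a 0 - D₂ a 0) - (D₃ 0 0 - D₁ 0 0 - D₂ 0 0),
      fun b => D₃ 0 b - D₁ 0 b - D₂ 0 b, fun a b => ?_⟩
    have hP0 : ∀ a b, cornerSum N (fun a b => D₃ a b - D₁ a b - D₂ a b) a b = 0 := by
      intro a b
      have e3 := h₃ a b
      have e12 := hdom a b
      have esplit : cornerSum N (fun a b => D₃ a b - D₁ a b - D₂ a b) a b
          = cornerSum N D₃ a b - cornerSum N (fun a b => D₁ a b + D₂ a b) a b := by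
        simp only [cornerSum]; ring
      rw [esplit, e3, e12]
      ring
    have h := GridAux.struct hP0 a b
    show D₃ a b = D₁ a b + D₂ a b
      + ((D₃ a 0 - D₁ a 0 - D₂ a 0 - (D₃ 0 0 - D₁ 0 0 - D₂ 0 0))
        + (D₃ 0 b - D₁ 0 b - D₂ 0 b))
    omega
  have hO : ∑ i, D₃ i (σO i) = (∑ i, D₁ i (σO i)) + (∑ i, D₂ i (σO i))
      + ((∑ i, f i) + ∑ i, g i) := by
    rw [Finset.sum_congr rfl (fun i (_ : i ∈ Finset.univ) => hD i (σO i)),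
      Finset.sum_add_distrib, Finset.sum_add_distrib, Finset.sum_add_distrib,
      Equiv.sum_comp σO g]
  constructor
  · -- Maslov gradings
    have q2 : maslovIndex N x z D₃ = maslovIndex N x z (fun a b => D₁ a b + D₂ a b)
        + 2 * ((∑ i, f i : ℤ) : ℚ) + 2 * ((∑ i, g i : ℤ) : ℚ) := by
      rw [GridAux.maslov_eq x z D₃, GridAux.maslov_eq x z,
        GridAux.S4_split f g hD x, GridAux.S4_split f g hD z]
      simp only [GridAux.S4_fg, GridAux.S4_add]
      push_cast
      ring
    have q3 : (∑ i, (D₃ i (σO i) : ℚ)) = (∑ i, (D₁ i (σO i) : ℚ))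
        + (∑ i, (D₂ i (σO i) : ℚ))
        + (((∑ i, f i : ℤ) : ℚ) + ((∑ i, g i : ℤ) : ℚ)) := by
      have := congrArg (fun t : ℤ => (t : ℚ)) hO
      push_cast at this ⊢
      linarith
    push_cast at q2 q3 ⊢
    linarith [hmu, q2, q3]
  · -- Alexander gradings
    have hgX : ∑ i, g (σX i) = ∑ i, g i := Equiv.sum_comp σX g
    have hgO : ∑ i, g (σO i) = ∑ i, g i := Equiv.sum_comp σO g
    have hstep : ∀ i, D₃ i (σX i) - D₃ i (σO i)
        = (D₁ i (σX i) - D₁ i (σO i)) + (D₂ i (σX i) - D₂ i (σO i))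
          + (g (σX i) - g (σO i)) := fun i => by rw [hD, hD]; ring
    rw [Finset.sum_congr rfl (fun i (_ : i ∈ Finset.univ) => hstep i)]
    simp only [Finset.sum_add_distrib, Finset.sum_sub_distrib]
    rw [hgX, hgO]
    ring
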